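/- Let T ≥ 2 and define f̄_m(x,z) = -Ψ(1)Φ(x₁) + Σ_{i=2}^{T}[Ψ(-z_i)Φ(-x_i) - Ψ(z_i)Φ(x_i)] + 6·Σ_{i=1}^{T-1}(x_i - (1/2)·z_{i+1})² for x ∈ ℝ^T and z = (z₂,…,z_T) ∈ ℝ^{T-1}. If there exists an index i with 2 ≤ i ≤ T and |z_i| < 1, then the Euclidean norm of the full gradient of f̄_m at (x,z) (with respect to all 2T-1 variables) satisfies ‖∇f̄_m(x,z)‖₂ > 1/3. -/

import Mathlib

/-- `Ψ(x) = 0` for `x ≤ 1/2`, `exp(1 - 1/(2x-1)²)` for `x > 1/2`. -/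
noncomputable def Psi (x : ℝ) : ℝ :=
  if x ≤ 1 / 2 then 0 else Real.exp (1 - 1 / (2 * x - 1) ^ 2)

/-- `Φ(x) = √e · ∫_{-∞}^x e^{-t²/2} dt`. -/
noncomputable def Phi (x : ℝ) : ℝ :=
  Real.sqrt (Real.exp 1) * ∫ t in Set.Iic x, Real.exp (-t ^ 2 / 2)

open MeasureTheory

noncomputable def phiD (x : ℝ) : ℝ := Real.sqrt (Real.exp 1) * Real.exp (-x ^ 2 / 2)

noncomputable def psiD (x : ℝ) : ℝ :=
  if x ≤ 1 / 2 then 0 else Real.exp (1 - 1 / (2 * x - 1) ^ 2) * (4 / (2 * x - 1) ^ 3)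

lemma gauss_integrable : Integrable (fun t : ℝ => Real.exp (-t ^ 2 / 2)) := by
  have h := integrable_exp_neg_mul_sq (b := (1/2 : ℝ)) (by norm_num)
  have heq : (fun t : ℝ => Real.exp (-t ^ 2 / 2)) = fun t : ℝ => Real.exp (-(1/2 : ℝ) * t ^ 2) := by
    funext t; ring_nf
  rw [heq]; exact h

lemma hasDerivAt_Phi (x : ℝ) : HasDerivAt Phi (phiD x) x := by
  have hc : Continuous fun t : ℝ => Real.exp (-t ^ 2 / 2) := by continuity
  have key : ∀ y : ℝ, Phi y = Real.sqrt (Real.exp 1) *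
      ((∫ t in Set.Iic (0:ℝ), Real.exp (-t ^ 2 / 2)) + ∫ t in (0:ℝ)..y, Real.exp (-t ^ 2 / 2)) := by
    intro y
    rw [Phi]
    congr 1
    rw [← intervalIntegral.integral_Iic_sub_Iic gauss_integrable.integrableOn
      gauss_integrable.integrableOn]
    ring
  have h1 : HasDerivAt (fun y : ℝ => Real.sqrt (Real.exp 1) *
      ((∫ t in Set.Iic (0:ℝ), Real.exp (-t ^ 2 / 2)) + ∫ t in (0:ℝ)..y, Real.exp (-t ^ 2 / 2)))
      (phiD x) x := by
    have h2 := ((hc.integral_hasStrictDerivAt 0 x).hasDerivAt.const_add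
      (∫ t in Set.Iic (0:ℝ), Real.exp (-t ^ 2 / 2))).const_mul (Real.sqrt (Real.exp 1))
    simpa [phiD] using h2
  exact h1.congr_of_eventuallyEq (Filter.Eventually.of_forall key)

lemma Phi_nonneg (x : ℝ) : 0 ≤ Phi x := by
  apply mul_nonneg (Real.sqrt_nonneg _)
  exact integral_nonneg fun t => (Real.exp_pos _).le

lemma phiD_neg (x : ℝ) : phiD (-x) = phiD x := by simp [phiD]

lemma phiD_nonneg (x : ℝ) : 0 ≤ phiD x :=
  mul_nonneg (Real.sqrt_nonneg _) (Real.exp_pos _).le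

lemma sqrt_exp_one : Real.sqrt (Real.exp 1) = Real.exp (1/2) := by
  rw [← Real.exp_half]

lemma one_lt_phiD {x : ℝ} (h : |x| < 1) : 1 < phiD x := by
  have hx2 : x ^ 2 < 1 := by
    have := abs_nonneg x
    nlinarith [sq_abs x]
  rw [phiD, sqrt_exp_one, ← Real.exp_add]
  have : (0:ℝ) < 1/2 + -x ^ 2 / 2 := by nlinarith
  calc (1:ℝ) = Real.exp 0 := by simp
  _ < _ := Real.exp_lt_exp.2 this

lemma Psi_nonneg (x : ℝ) : 0 ≤ Psi x := by
  rw [Psi]; split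
  · exact le_refl 0
  · exact (Real.exp_pos _).le

lemma Psi_one : Psi 1 = 1 := by
  rw [Psi]; norm_num

lemma one_le_Psi {x : ℝ} (h : 1 ≤ x) : 1 ≤ Psi x := by
  rw [Psi, if_neg (by linarith)]
  have h1 : (1:ℝ) ≤ 2 * x - 1 := by linarith
  have h2 : (1:ℝ) ≤ (2 * x - 1) ^ 2 := by nlinarith
  have h3 : 1 / (2 * x - 1) ^ 2 ≤ 1 := by
    rw [div_le_one (by linarith)]; exact h2
  have h4 : (0:ℝ) ≤ 1 - 1 / (2 * x - 1) ^ 2 := by linarith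
  calc (1:ℝ) = Real.exp 0 := by simp
  _ ≤ _ := Real.exp_le_exp.2 h4

lemma psiD_nonneg (x : ℝ) : 0 ≤ psiD x := by
  rw [psiD]; split
  · exact le_refl 0
  · rename_i h
    push_neg at h
    have : (0:ℝ) < 2 * x - 1 := by linarith
    positivity

lemma hasDerivAt_Psi (x : ℝ) : HasDerivAt Psi (psiD x) x := by
  rcases lt_trichotomy x (1/2) with hx | hx | hx
  · -- locally zero
    have hev : Psi =ᶠ[nhds x] fun _ => 0 := by
      filter_upwards [eventually_lt_nhds hx] with y hy
      rw [Psi, if_pos hy.le]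
    have : HasDerivAt (fun _ : ℝ => (0:ℝ)) 0 x := hasDerivAt_const x 0
    rw [psiD, if_pos hx.le]
    exact this.congr_of_eventuallyEq hev
  · -- x = 1/2
    subst hx
    rw [psiD, if_pos le_rfl]
    rw [hasDerivAt_iff_tendsto_slope]
    apply squeeze_zero_norm' (a := fun y => 4 * Real.exp 1 * |y - 1/2|)
    · filter_upwards [self_mem_nhdsWithin] with y (hy : y ≠ (1/2:ℝ))
      rw [slope_def_field, Psi, Psi, if_pos le_rfl, sub_zero]
      rcases lt_or_gt_of_ne hy with h | h
      · rw [if_pos h.le]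
        simp only [zero_div, norm_zero]
        positivity
      · rw [if_neg (not_le.2 h)]
        have hs : (0:ℝ) < 2 * y - 1 := by linarith
        have hpsile : Real.exp (1 - 1 / (2 * y - 1) ^ 2) ≤ Real.exp 1 * (2 * y - 1) ^ 2 := by
          have hu : (0:ℝ) < 1 / (2 * y - 1) ^ 2 := by positivity
          have h1 : ((2 * y - 1) ^ 2)⁻¹ ≤ Real.exp (1 / (2 * y - 1) ^ 2) := by
            rw [← one_div]
            linarith [Real.add_one_le_exp (1 / (2 * y - 1) ^ 2)]
          have he : Real.exp (-(1 / (2 * y - 1) ^ 2)) ≤ (2 * y - 1) ^ 2 := by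
            rw [Real.exp_neg]
            calc (Real.exp (1 / (2 * y - 1) ^ 2))⁻¹ ≤ (((2 * y - 1) ^ 2)⁻¹)⁻¹ := by
                  apply inv_anti₀ (by positivity) h1
            _ = (2 * y - 1) ^ 2 := inv_inv _
          calc Real.exp (1 - 1 / (2 * y - 1) ^ 2)
              = Real.exp 1 * Real.exp (-(1 / (2 * y - 1) ^ 2)) := by
                rw [← Real.exp_add]; ring_nf
            _ ≤ Real.exp 1 * (2 * y - 1) ^ 2 := by
                exact mul_le_mul_of_nonneg_left he (Real.exp_pos 1).le
        have hyy : (0:ℝ) < y - 1/2 := by linarith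
        have : Real.exp (1 - 1 / (2 * y - 1) ^ 2) / (y - 1/2) ≤ 4 * Real.exp 1 * (y - 1/2) := by
          rw [div_le_iff₀ hyy]
          calc Real.exp (1 - 1 / (2 * y - 1) ^ 2) ≤ Real.exp 1 * (2 * y - 1) ^ 2 := hpsile
          _ = 4 * Real.exp 1 * (y - 1/2) * (y - 1/2) := by ring
        rw [Real.norm_eq_abs, abs_of_nonneg (by positivity), abs_of_pos hyy]
        exact this
    · have hcont : Continuous fun y : ℝ => 4 * Real.exp 1 * |y - 1/2| := by continuity
      have h5 : Filter.Tendsto (fun y : ℝ => 4 * Real.exp 1 * |y - 1/2|)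
          (nhdsWithin (1/2 : ℝ) {(1/2:ℝ)}ᶜ) (nhds (4 * Real.exp 1 * |1/2 - 1/2|)) :=
        (hcont.tendsto (1/2)).mono_left nhdsWithin_le_nhds
      simpa using h5
  · -- x > 1/2
    have hs : (0:ℝ) < 2 * x - 1 := by linarith
    have h1 : HasDerivAt (fun y : ℝ => 2 * y - 1) 2 x := by
      simpa using ((hasDerivAt_id x).const_mul (2:ℝ)).sub_const 1
    have h2 : HasDerivAt (fun y : ℝ => (2 * y - 1) ^ 2) (2 * (2 * x - 1) ^ 1 * 2) x := h1.pow 2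
    have h3 : HasDerivAt (fun y : ℝ => 1 - 1 / (2 * y - 1) ^ 2)
        (2 * (2 * x - 1) ^ 1 * 2 / ((2 * x - 1) ^ 2) ^ 2) x := by
      have hne : ((2 * x - 1) ^ 2 : ℝ) ≠ 0 := by positivity
      have hinv := (h2.inv hne).const_sub 1
      simp only [one_div]
      exact hinv.congr_deriv (by ring)
    have h4 := h3.exp
    have hev : Psi =ᶠ[nhds x] fun y => Real.exp (1 - 1 / (2 * y - 1) ^ 2) := by
      filter_upwards [eventually_gt_nhds hx] with y hy
      rw [Psi, if_neg (not_le.2 hy)]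
    have hfinal := h4.congr_of_eventuallyEq hev
    have : psiD x = Real.exp (1 - 1 / (2 * x - 1) ^ 2) * (2 * (2 * x - 1) ^ 1 * 2 / ((2 * x - 1) ^ 2) ^ 2) := by
      rw [psiD, if_neg (not_le.2 hx)]
      have hne : (2 * x - 1 : ℝ) ≠ 0 := ne_of_gt hs
      field_simp
      ring
    rw [this]
    exact hfinal


/-- `f̄_m(x, z)` on the Euclidean space `ℝ^T × ℝ^{T-1}` (so that gradients and norms
are with respect to the Euclidean structure on all `2T - 1` variables).
Coordinate `Sum.inl j` is the math variable `x_{j+1}`; `Sum.inr j` is `z_{j+2}`. -/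
noncomputable def fmE (T : ℕ) (hT : 2 ≤ T)
    (w : EuclideanSpace ℝ (Fin T ⊕ Fin (T - 1))) : ℝ :=
  -Psi 1 * Phi (w (Sum.inl ⟨0, by omega⟩))
    + ∑ j : Fin (T - 1),
        (Psi (-w (Sum.inr j)) * Phi (-w (Sum.inl ⟨(j : ℕ) + 1, by have := j.isLt; omega⟩))
          - Psi (w (Sum.inr j)) * Phi (w (Sum.inl ⟨(j : ℕ) + 1, by have := j.isLt; omega⟩)))
    + 6 * ∑ j : Fin (T - 1),
        (w (Sum.inl ⟨(j : ℕ), by have := j.isLt; omega⟩) - (1 / 2) * w (Sum.inr j)) ^ 2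

lemma fmE_fderiv (T : ℕ) (hT : 2 ≤ T) (w : EuclideanSpace ℝ (Fin T ⊕ Fin (T - 1))) :
    ∃ L : EuclideanSpace ℝ (Fin T ⊕ Fin (T - 1)) →L[ℝ] ℝ,
      HasFDerivAt (fmE T hT) L w ∧ ∀ v : EuclideanSpace ℝ (Fin T ⊕ Fin (T - 1)),
        L v = -Psi 1 * phiD (w (Sum.inl ⟨0, by omega⟩)) * v (Sum.inl ⟨0, by omega⟩)
          + ∑ j : Fin (T - 1),
              ((-(psiD (-w (Sum.inr j)) * Phi (-w (Sum.inl ⟨(j : ℕ) + 1, by have := j.isLt; omega⟩)))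
                  - psiD (w (Sum.inr j)) * Phi (w (Sum.inl ⟨(j : ℕ) + 1, by have := j.isLt; omega⟩)))
                  * v (Sum.inr j)
                + (-(Psi (-w (Sum.inr j)) * phiD (-w (Sum.inl ⟨(j : ℕ) + 1, by have := j.isLt; omega⟩)))
                  - Psi (w (Sum.inr j)) * phiD (w (Sum.inl ⟨(j : ℕ) + 1, by have := j.isLt; omega⟩)))
                  * v (Sum.inl ⟨(j : ℕ) + 1, by have := j.isLt; omega⟩))
          + ∑ j : Fin (T - 1),
              (12 * (w (Sum.inl ⟨(j : ℕ), by have := j.isLt; omega⟩) - 1 / 2 * w (Sum.inr j))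
                  * v (Sum.inl ⟨(j : ℕ), by have := j.isLt; omega⟩)
                - 6 * (w (Sum.inl ⟨(j : ℕ), by have := j.isLt; omega⟩) - 1 / 2 * w (Sum.inr j))
                  * v (Sum.inr j)) := by
  classical
  set pr : (Fin T ⊕ Fin (T - 1)) → (EuclideanSpace ℝ (Fin T ⊕ Fin (T - 1)) →L[ℝ] ℝ) :=
    fun k => EuclideanSpace.proj k with hpr
  have hproj : ∀ k : Fin T ⊕ Fin (T - 1),
      HasFDerivAt (fun w' : EuclideanSpace ℝ (Fin T ⊕ Fin (T - 1)) => w' k) (pr k) w := by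
    intro k
    exact (EuclideanSpace.proj k : EuclideanSpace ℝ (Fin T ⊕ Fin (T - 1)) →L[ℝ] ℝ).hasFDerivAt
  set l0 : Fin T := ⟨0, by omega⟩ with hl0
  have hA : HasFDerivAt (fun w' : EuclideanSpace ℝ (Fin T ⊕ Fin (T - 1)) =>
      -Psi 1 * Phi (w' (Sum.inl l0)))
      ((-Psi 1) • (phiD (w (Sum.inl l0)) • pr (Sum.inl l0))) w :=
    ((hasDerivAt_Phi _).comp_hasFDerivAt w (hproj (Sum.inl l0))).const_mul (-Psi 1)
  have hB : ∀ j : Fin (T - 1), HasFDerivAt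
      (fun w' : EuclideanSpace ℝ (Fin T ⊕ Fin (T - 1)) =>
        Psi (-w' (Sum.inr j)) * Phi (-w' (Sum.inl ⟨(j : ℕ) + 1, by have := j.isLt; omega⟩))
          - Psi (w' (Sum.inr j)) * Phi (w' (Sum.inl ⟨(j : ℕ) + 1, by have := j.isLt; omega⟩)))
      ((Psi (-w (Sum.inr j)) • (phiD (-w (Sum.inl ⟨(j : ℕ) + 1, by have := j.isLt; omega⟩)) •
          (-pr (Sum.inl ⟨(j : ℕ) + 1, by have := j.isLt; omega⟩)))
        + Phi (-w (Sum.inl ⟨(j : ℕ) + 1, by have := j.isLt; omega⟩)) •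
            (psiD (-w (Sum.inr j)) • (-pr (Sum.inr j))))
       - (Psi (w (Sum.inr j)) • (phiD (w (Sum.inl ⟨(j : ℕ) + 1, by have := j.isLt; omega⟩)) •
            pr (Sum.inl ⟨(j : ℕ) + 1, by have := j.isLt; omega⟩))
        + Phi (w (Sum.inl ⟨(j : ℕ) + 1, by have := j.isLt; omega⟩)) •
            (psiD (w (Sum.inr j)) • pr (Sum.inr j)))) w := by
    intro j
    have h1 : HasFDerivAt (fun w' : EuclideanSpace ℝ (Fin T ⊕ Fin (T - 1)) => Psi (-w' (Sum.inr j)))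
        (psiD (-w (Sum.inr j)) • (-pr (Sum.inr j))) w :=
      (hasDerivAt_Psi _).comp_hasFDerivAt w (hproj (Sum.inr j)).neg
    have h2 : HasFDerivAt (fun w' : EuclideanSpace ℝ (Fin T ⊕ Fin (T - 1)) =>
        Phi (-w' (Sum.inl ⟨(j : ℕ) + 1, by have := j.isLt; omega⟩)))
        (phiD (-w (Sum.inl ⟨(j : ℕ) + 1, by have := j.isLt; omega⟩)) •
          (-pr (Sum.inl ⟨(j : ℕ) + 1, by have := j.isLt; omega⟩))) w :=
      (hasDerivAt_Phi _).comp_hasFDerivAt w (hproj (Sum.inl ⟨(j : ℕ) + 1, by have := j.isLt; omega⟩)).neg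
    have h3 : HasFDerivAt (fun w' : EuclideanSpace ℝ (Fin T ⊕ Fin (T - 1)) => Psi (w' (Sum.inr j)))
        (psiD (w (Sum.inr j)) • (pr (Sum.inr j))) w :=
      (hasDerivAt_Psi _).comp_hasFDerivAt w (hproj (Sum.inr j))
    have h4 : HasFDerivAt (fun w' : EuclideanSpace ℝ (Fin T ⊕ Fin (T - 1)) =>
        Phi (w' (Sum.inl ⟨(j : ℕ) + 1, by have := j.isLt; omega⟩)))
        (phiD (w (Sum.inl ⟨(j : ℕ) + 1, by have := j.isLt; omega⟩)) •
          (pr (Sum.inl ⟨(j : ℕ) + 1, by have := j.isLt; omega⟩))) w :=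
      (hasDerivAt_Phi _).comp_hasFDerivAt w (hproj (Sum.inl ⟨(j : ℕ) + 1, by have := j.isLt; omega⟩))
    exact (h1.mul h2).sub (h3.mul h4)
  have hC : ∀ j : Fin (T - 1), HasFDerivAt
      (fun w' : EuclideanSpace ℝ (Fin T ⊕ Fin (T - 1)) =>
        (w' (Sum.inl ⟨(j : ℕ), by have := j.isLt; omega⟩) - (1 / 2) * w' (Sum.inr j)) ^ 2)
      ((w (Sum.inl ⟨(j : ℕ), by have := j.isLt; omega⟩) - (1 / 2) * w (Sum.inr j)) •
          (pr (Sum.inl ⟨(j : ℕ), by have := j.isLt; omega⟩) - (1 / 2 : ℝ) • pr (Sum.inr j))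
        + (w (Sum.inl ⟨(j : ℕ), by have := j.isLt; omega⟩) - (1 / 2) * w (Sum.inr j)) •
          (pr (Sum.inl ⟨(j : ℕ), by have := j.isLt; omega⟩) - (1 / 2 : ℝ) • pr (Sum.inr j))) w := by
    intro j
    have hbase : HasFDerivAt
        (fun w' : EuclideanSpace ℝ (Fin T ⊕ Fin (T - 1)) =>
          w' (Sum.inl ⟨(j : ℕ), by have := j.isLt; omega⟩) - (1 / 2) * w' (Sum.inr j))
        (pr (Sum.inl ⟨(j : ℕ), by have := j.isLt; omega⟩) - (1 / 2 : ℝ) • pr (Sum.inr j)) w :=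
      (hproj (Sum.inl ⟨(j : ℕ), by have := j.isLt; omega⟩)).sub
        ((hproj (Sum.inr j)).const_mul (1 / 2))
    have hm := hbase.mul hbase
    simp only [← pow_two] at hm
    exact hm
  have hsumB := HasFDerivAt.fun_sum (u := Finset.univ) (fun j (_ : j ∈ Finset.univ) => hB j)
  have hsumC := (HasFDerivAt.fun_sum (u := Finset.univ) (fun j (_ : j ∈ Finset.univ) => hC j)).const_mul (6 : ℝ)
  have htot := (hA.add hsumB).add hsumC
  refine ⟨_, htot, ?_⟩
  intro v
  simp only [hpr, ContinuousLinearMap.add_apply, ContinuousLinearMap.coe_sum',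
    ContinuousLinearMap.sub_apply, ContinuousLinearMap.smul_apply,
    ContinuousLinearMap.neg_apply, Finset.sum_apply, PiLp.proj_apply, smul_eq_mul]
  congr 1
  · congr 1
    · ring
    · apply Finset.sum_congr rfl
      intro j _
      ring
  · rw [Finset.mul_sum]
    apply Finset.sum_congr rfl
    intro j _
    push_cast
    ring

lemma sum_ite_coe {N : ℕ} (n : ℕ) (hn : n < N) (c : Fin N → ℝ) :
    (∑ x : Fin N, if (x : ℕ) = n then c x else 0) = c ⟨n, hn⟩ := by
  rw [Finset.sum_eq_single (⟨n, hn⟩ : Fin N)]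
  · simp
  · intro b _ hb
    rw [if_neg]
    simpa [Fin.ext_iff] using hb
  · simp


/-- if some `|z_i| < 1` then the Euclidean norm of the full gradient of
`f̄_m` exceeds `1/3`. -/
theorem stmt_8 (T : ℕ) (hT : 2 ≤ T)
    (w : EuclideanSpace ℝ (Fin T ⊕ Fin (T - 1)))
    (j : Fin (T - 1)) (hj : |w (Sum.inr j)| < 1) :
    1 / 3 < ‖gradient (fmE T hT) w‖ := by
  classical
  by_contra hcon
  push_neg at hcon
  obtain ⟨L, hL, hLv⟩ := fmE_fderiv T hT w
  have hgrad : gradient (fmE T hT) w = (InnerProductSpace.toDual ℝ _).symm L := by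
    rw [gradient, hL.fderiv]
  have hbound : ∀ k : Fin T ⊕ Fin (T - 1), |L (EuclideanSpace.single k 1)| ≤ 1 / 3 := by
    intro k
    have h1 : inner ℝ (gradient (fmE T hT) w) (EuclideanSpace.single k (1:ℝ))
        = L (EuclideanSpace.single k 1) := by
      rw [hgrad]; exact InnerProductSpace.toDual_symm_apply
    calc |L (EuclideanSpace.single k 1)|
        = |inner ℝ (gradient (fmE T hT) w) (EuclideanSpace.single k (1:ℝ))| := by rw [h1]
      _ ≤ ‖gradient (fmE T hT) w‖ * ‖EuclideanSpace.single k (1:ℝ)‖ := abs_real_inner_le_norm _ _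
      _ ≤ 1 / 3 * 1 := by
          apply mul_le_mul hcon _ (norm_nonneg _) (by norm_num)
          rw [EuclideanSpace.norm_single]; simp
      _ = 1 / 3 := by norm_num
  have hex : ∃ n : ℕ, ∃ h : n < T - 1, |w (Sum.inr ⟨n, h⟩)| < 1 := ⟨j.1, j.isLt, hj⟩
  obtain ⟨n, ⟨hn1, hn2⟩, hmin⟩ : ∃ n : ℕ, (∃ h : n < T - 1, |w (Sum.inr ⟨n, h⟩)| < 1) ∧
      ∀ m, m < n → ¬∃ h : m < T - 1, |w (Sum.inr ⟨m, h⟩)| < 1 :=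
    ⟨Nat.find hex, Nat.find_spec hex, fun m hm => Nat.find_min hex hm⟩
  have hk0 : n < T := by omega
  have hkS : n + 1 < T := by omega
  -- z-partial derivative
  have hgz : L (EuclideanSpace.single (Sum.inr ⟨n, hn1⟩) 1)
      = (-(psiD (-w (Sum.inr ⟨n, hn1⟩)) * Phi (-w (Sum.inl ⟨n + 1, hkS⟩)))
          - psiD (w (Sum.inr ⟨n, hn1⟩)) * Phi (w (Sum.inl ⟨n + 1, hkS⟩)))
        - 6 * (w (Sum.inl ⟨n, hk0⟩) - 1 / 2 * w (Sum.inr ⟨n, hn1⟩)) := by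
    rw [hLv]
    simp [EuclideanSpace.single_apply, mul_ite, Finset.sum_ite_eq', Finset.sum_sub_distrib]
    ring
  have hgu : ∃ Q : ℝ, L (EuclideanSpace.single (Sum.inl ⟨n, hk0⟩) 1)
      = -Q + 12 * (w (Sum.inl ⟨n, hk0⟩) - 1 / 2 * w (Sum.inr ⟨n, hn1⟩))
      ∧ phiD (w (Sum.inl ⟨n, hk0⟩)) ≤ Q := by
    rcases n with _ | m
    · refine ⟨Psi 1 * phiD (w (Sum.inl ⟨0, hk0⟩)), ?_, ?_⟩
      · rw [hLv]
        simp [EuclideanSpace.single_apply, mul_ite, Finset.sum_ite_eq', Finset.sum_sub_distrib]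
        rw [sum_ite_coe 0 hn1]
      · rw [Psi_one, one_mul]
    · have hmT : m < T - 1 := by omega
      refine ⟨Psi (-w (Sum.inr ⟨m, hmT⟩)) * phiD (-w (Sum.inl ⟨m + 1, hk0⟩))
          + Psi (w (Sum.inr ⟨m, hmT⟩)) * phiD (w (Sum.inl ⟨m + 1, hk0⟩)), ?_, ?_⟩
      · rw [hLv]
        simp [EuclideanSpace.single_apply, mul_ite, Finset.sum_ite_eq', Finset.sum_sub_distrib]
        rw [sum_ite_coe (m + 1) hn1, sum_ite_coe m hmT]
        ring
      · have hz' : ¬(|w (Sum.inr ⟨m, hmT⟩)| < 1) := fun hc => hmin m (by omega) ⟨hmT, hc⟩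
        push_neg at hz'
        rw [phiD_neg]
        rcases le_abs.mp hz' with h | h
        · nlinarith [one_le_Psi h, Psi_nonneg (-w (Sum.inr ⟨m, hmT⟩)),
            phiD_nonneg (w (Sum.inl ⟨m + 1, hk0⟩))]
        · nlinarith [one_le_Psi h, Psi_nonneg (w (Sum.inr ⟨m, hmT⟩)),
            phiD_nonneg (w (Sum.inl ⟨m + 1, hk0⟩))]
  obtain ⟨Q, hQv, hQ1⟩ := hgu
  have h1 := hbound (Sum.inr ⟨n, hn1⟩)
  rw [hgz] at h1
  have h2 := hbound (Sum.inl ⟨n, hk0⟩)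
  rw [hQv] at h2
  rw [abs_le] at h1 h2
  have hP1 : 0 ≤ psiD (-w (Sum.inr ⟨n, hn1⟩)) * Phi (-w (Sum.inl ⟨n + 1, hkS⟩)) :=
    mul_nonneg (psiD_nonneg _) (Phi_nonneg _)
  have hP2 : 0 ≤ psiD (w (Sum.inr ⟨n, hn1⟩)) * Phi (w (Sum.inl ⟨n + 1, hkS⟩)) :=
    mul_nonneg (psiD_nonneg _) (Phi_nonneg _)
  have ha1 : w (Sum.inl ⟨n, hk0⟩) - 1 / 2 * w (Sum.inr ⟨n, hn1⟩) ≤ 1 / 18 := by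
    linarith [h1.1]
  have hQ0 : 0 ≤ Q := le_trans (phiD_nonneg _) hQ1
  have ha2 : -(1 / 36) ≤ w (Sum.inl ⟨n, hk0⟩) - 1 / 2 * w (Sum.inr ⟨n, hn1⟩) := by
    linarith [h2.1]
  have hzabs := abs_lt.mp hn2
  have huabs : |w (Sum.inl ⟨n, hk0⟩)| < 1 := abs_lt.mpr ⟨by linarith, by linarith⟩
  have hphigt := one_lt_phiD huabs
  linarith [h2.1]
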